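/- Let S be a finite set with n elements, let r be a positive integer, and let P be a partition of S into exactly r nonempty parts having exactly k parts of cardinality one. Then the degree of P as a vertex of the r-partition graph G[S,r] equals (n - k)(r - 1). -/

import Mathlib

set_option linter.unusedSectionVars false

open Finset

/-- The parts of a partition after removing the point `x`, discarding empty parts. -/
def eraseParts {α : Type*} [DecidableEq α] (parts : Finset (Finset α)) (x : α) :
    Finset (Finset α) :=
  (parts.image fun t => t.erase x).filter fun t => t.Nonempty

/-- The `r`-partition graph of a finite set `S`: vertices are the partitions of `S`
into exactly `r` nonempty parts, and two partitions are adjacent iff their partition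
distance is `1`, i.e. there is exactly one element `x ∈ S` whose removal makes the two
partitions agree on `S \ {x}`. -/
def partitionGraph {α : Type*} [DecidableEq α] (S : Finset α) (r : ℕ) :
    SimpleGraph {P : Finpartition S // P.parts.card = r} where
  Adj P Q := P ≠ Q ∧ ∃! x, x ∈ S ∧ eraseParts P.1.parts x = eraseParts Q.1.parts x
  symm := by
    constructor
    rintro P Q ⟨hne, x, ⟨hx1, hx2⟩, hu⟩
    exact ⟨hne.symm, x, ⟨hx1, hx2.symm⟩, fun y hy => hu y ⟨hy.1, hy.2.symm⟩⟩
  loopless := by constructor; rintro P ⟨h, -⟩; exact h rfl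

section Aux

variable {α : Type*} [DecidableEq α] {S : Finset α} {P Q : Finpartition S} {x : α} {A B : Finset α}

section Basic

lemma part_not_mem_of_card_ne_one (hx : x ∈ S) (h2 : (P.part x).card ≠ 1) :
    ((P.part x).erase x) ∉ P.parts := by
  intro hmem
  have hne : ((P.part x).erase x).Nonempty := by
    rw [← Finset.card_pos, Finset.card_erase_of_mem (P.mem_part hx)]
    have := Finset.card_pos.2 ⟨x, P.mem_part hx⟩
    omega
  obtain ⟨y, hy⟩ := hne
  have : (P.part x).erase x = P.part x :=
    P.eq_of_mem_parts hmem (P.part_mem.2 hx) hy (Finset.mem_of_mem_erase hy)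
  exact (Finset.notMem_erase x _) (this ▸ P.mem_part hx)

lemma not_mem_of_mem_erase_part (hx : x ∈ S) (hC : A ∈ P.parts.erase (P.part x)) : x ∉ A := by
  intro hxC
  exact (Finset.ne_of_mem_erase hC) (P.eq_of_mem_parts (Finset.mem_of_mem_erase hC) (P.part_mem.2 hx) hxC (P.mem_part hx))

lemma erase_nonempty_of_card_ne_one (hx : x ∈ S) (h2 : (P.part x).card ≠ 1) :
    ((P.part x).erase x).Nonempty := by
  rw [← Finset.card_pos, Finset.card_erase_of_mem (P.mem_part hx)]
  have := Finset.card_pos.2 ⟨x, P.mem_part hx⟩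
  omega

/-- eraseParts when the part of x is a singleton -/
lemma eraseParts_eq_of_card_eq_one (hx : x ∈ S) (h1 : (P.part x).card = 1) :
    eraseParts P.parts x = P.parts.erase {x} := by
  have hpart : P.part x = {x} := by
    rw [Finset.card_eq_one] at h1
    obtain ⟨a, ha⟩ := h1
    have := P.mem_part hx
    rw [ha] at this ⊢
    simp_all
  ext t
  simp only [eraseParts, Finset.mem_filter, Finset.mem_image, Finset.mem_erase]
  constructor
  · rintro ⟨⟨u, hu, rfl⟩, hne⟩
    rcases eq_or_ne u (P.part x) with rfl | hne2
    · rw [hpart] at hne; simp at hne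
    · have hxu : x ∉ u := fun hxu =>
        hne2 (P.eq_of_mem_parts hu (P.part_mem.2 hx) hxu (P.mem_part hx))
      rw [Finset.erase_eq_of_notMem hxu]
      refine ⟨fun h => hne2 (h ▸ hpart.symm), hu⟩
  · rintro ⟨hne, ht⟩
    have hxt : x ∉ t := fun hxt => hne (P.eq_of_mem_parts ht (P.part_mem.2 hx) hxt (P.mem_part hx) |>.trans hpart)
    exact ⟨⟨t, ht, Finset.erase_eq_of_notMem hxt⟩, P.nonempty_of_mem_parts ht⟩

/-- eraseParts when the part of x is not a singleton -/
lemma eraseParts_eq_of_card_ne_one (hx : x ∈ S) (h2 : (P.part x).card ≠ 1) :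
    eraseParts P.parts x = insert ((P.part x).erase x) (P.parts.erase (P.part x)) := by
  ext t
  simp only [eraseParts, Finset.mem_filter, Finset.mem_image, Finset.mem_insert, Finset.mem_erase]
  constructor
  · rintro ⟨⟨u, hu, rfl⟩, hne⟩
    rcases eq_or_ne u (P.part x) with rfl | hne2
    · exact Or.inl rfl
    · have hxu : x ∉ u := fun hxu =>
        hne2 (P.eq_of_mem_parts hu (P.part_mem.2 hx) hxu (P.mem_part hx))
      rw [Finset.erase_eq_of_notMem hxu]
      exact Or.inr ⟨hne2, hu⟩
  · rintro (rfl | ⟨hne, ht⟩)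
    · exact ⟨⟨P.part x, P.part_mem.2 hx, rfl⟩, erase_nonempty_of_card_ne_one hx h2⟩
    · have hxt : x ∉ t := fun hxt => hne (P.eq_of_mem_parts ht (P.part_mem.2 hx) hxt (P.mem_part hx))
      exact ⟨⟨t, ht, Finset.erase_eq_of_notMem hxt⟩, P.nonempty_of_mem_parts ht⟩

lemma card_eraseParts_of_card_eq_one (hx : x ∈ S) (h1 : (P.part x).card = 1) :
    (eraseParts P.parts x).card = P.parts.card - 1 := by
  rw [eraseParts_eq_of_card_eq_one hx h1]
  have hpart : P.part x = {x} := by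
    rw [Finset.card_eq_one] at h1
    obtain ⟨a, ha⟩ := h1
    have := P.mem_part hx
    rw [ha] at this ⊢; simp_all
  rw [Finset.card_erase_of_mem (hpart ▸ P.part_mem.2 hx)]

lemma card_eraseParts_of_card_ne_one (hx : x ∈ S) (h2 : (P.part x).card ≠ 1) :
    (eraseParts P.parts x).card = P.parts.card := by
  rw [eraseParts_eq_of_card_ne_one hx h2,
    Finset.card_insert_of_notMem, Finset.card_erase_of_mem (P.part_mem.2 hx)]
  · have := Finset.card_pos.2 ⟨P.part x, P.part_mem.2 hx⟩
    omega
  · intro hmem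
    exact part_not_mem_of_card_ne_one hx h2 (Finset.mem_of_mem_erase hmem)

end Basic

section Move
variable (hx : x ∈ S) (hB : B ∈ P.parts) (hBA : B ≠ P.part x) (h2 : (P.part x).card ≠ 1)

/-- The parts after moving `x` from its own part into `B`. -/
def mvParts (P : Finpartition S) (x : α) (B : Finset α) : Finset (Finset α) :=
  insert (insert x B) (insert ((P.part x).erase x) ((P.parts.erase (P.part x)).erase B))

include hx hB hBA in
lemma x_not_mem_B : x ∉ B := fun hxB =>
  hBA (P.eq_of_mem_parts hB (P.part_mem.2 hx) hxB (P.mem_part hx))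

include hx hB hBA in
lemma disjoint_B_part : Disjoint B (P.part x) :=
  P.supIndep.pairwiseDisjoint hB (P.part_mem.2 hx) hBA

include hx in
lemma not_mem_of_mem_erase_part' (hC : A ∈ P.parts.erase (P.part x)) : x ∉ A := fun hxC =>
  (Finset.ne_of_mem_erase hC) (P.eq_of_mem_parts (Finset.mem_of_mem_erase hC) (P.part_mem.2 hx) hxC (P.mem_part hx))

include hx hB hBA h2 in
lemma move_supIndep : (mvParts P x B).SupIndep id := by
  rw [Finset.supIndep_iff_pairwiseDisjoint]
  have hdisjBA := disjoint_B_part hx hB hBA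
  have hchar : ∀ t ∈ mvParts P x B, t = insert x B ∨ t = (P.part x).erase x ∨
      (t ∈ P.parts ∧ t ≠ P.part x ∧ t ≠ B ∧ x ∉ t) := by
    intro t ht
    simp only [mvParts, Finset.mem_insert, Finset.mem_erase] at ht
    rcases ht with rfl | rfl | ⟨htB, htA, ht⟩
    · exact Or.inl rfl
    · exact Or.inr (Or.inl rfl)
    · exact Or.inr (Or.inr ⟨ht, htA, htB,
        not_mem_of_mem_erase_part' hx (Finset.mem_erase.2 ⟨htA, ht⟩)⟩)
  intro t ht u hu hne
  have hpd := P.supIndep.pairwiseDisjoint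
  have key : ∀ C ∈ P.parts, C ≠ P.part x → C ≠ B → x ∉ C → Disjoint (insert x B) C := by
    intro C hC hCA hCB hxC
    rw [Finset.disjoint_insert_left]
    exact ⟨hxC, hpd hB hC (fun h => hCB h.symm)⟩
  have key2 : ∀ C ∈ P.parts, C ≠ P.part x → Disjoint ((P.part x).erase x) C :=
    fun C hC hCA => Finset.disjoint_of_subset_left (Finset.erase_subset _ _)
      (hpd (P.part_mem.2 hx) hC (fun h => hCA h.symm))
  have keyAB : Disjoint (insert x B) ((P.part x).erase x) := by
    rw [Finset.disjoint_insert_left]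
    exact ⟨Finset.notMem_erase _ _,
      Finset.disjoint_of_subset_right (Finset.erase_subset _ _) hdisjBA⟩
  rcases hchar t ht with rfl | rfl | ⟨htP, htA, htB, hxt⟩ <;>
    rcases hchar u hu with rfl | rfl | ⟨huP, huA, huB, hxu⟩
  · exact absurd rfl hne
  · exact keyAB
  · exact key _ huP huA huB hxu
  · exact keyAB.symm
  · exact absurd rfl hne
  · exact key2 _ huP huA
  · exact (key _ htP htA htB hxt).symm
  · exact (key2 _ htP htA).symm
  · exact hpd htP huP hne

include hx hB hBA h2 in
lemma move_sup_parts : (mvParts P x B).sup id = S := by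
  refine le_antisymm (Finset.sup_le ?_) ?_
  · intro t ht
    simp only [id_eq, Finset.le_eq_subset]
    simp only [mvParts, Finset.mem_insert, Finset.mem_erase] at ht
    rcases ht with rfl | rfl | ⟨-, -, ht⟩
    · exact Finset.insert_subset hx (P.le hB)
    · exact (Finset.erase_subset _ _).trans (P.le (P.part_mem.2 hx))
    · exact P.le ht
  · show S ⊆ (mvParts P x B).sup id
    intro a ha
    rw [Finset.mem_sup]
    rcases eq_or_ne (P.part a) (P.part x) with hpa | hpa
    · rcases eq_or_ne a x with rfl | hax
      · exact ⟨insert a B, Finset.mem_insert_self _ _, Finset.mem_insert_self _ _⟩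
      · have hm : (P.part x).erase x ∈ mvParts P x B := by
          simp only [mvParts, Finset.mem_insert]; tauto
        exact ⟨(P.part x).erase x, hm, Finset.mem_erase.2 ⟨hax, hpa ▸ P.mem_part ha⟩⟩
    · rcases eq_or_ne (P.part a) B with hpb | hpb
      · exact ⟨insert x B, Finset.mem_insert_self _ _,
          Finset.mem_insert_of_mem (hpb ▸ P.mem_part ha)⟩
      · refine ⟨P.part a, ?_, P.mem_part ha⟩
        simp only [mvParts, Finset.mem_insert, Finset.mem_erase]
        exact Or.inr (Or.inr ⟨hpb, hpa, P.part_mem.2 ha⟩)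

include hx hB hBA h2 in
lemma move_not_bot_mem : ⊥ ∉ mvParts P x B := by
  intro hmem
  simp only [mvParts, Finset.mem_insert, Finset.mem_erase, Finset.bot_eq_empty] at hmem
  rcases hmem with h | h | ⟨-, -, h⟩
  · exact (Finset.insert_nonempty _ _).ne_empty h.symm
  · exact (erase_nonempty_of_card_ne_one hx h2).ne_empty h.symm
  · exact P.ne_bot h rfl

end Move

section Move2
variable (hx : x ∈ S) (hB : B ∈ P.parts) (hBA : B ≠ P.part x) (h2 : (P.part x).card ≠ 1)

include hx hB hBA in
lemma insert_not_mem_parts : insert x B ∉ P.parts := by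
  intro hmem
  have hxB : insert x B = P.part x :=
    P.part_eq_of_mem hmem (Finset.mem_insert_self _ _) |>.symm
  obtain ⟨b, hb⟩ := P.nonempty_of_mem_parts hB
  exact hBA (P.eq_of_mem_parts hB hmem hb (Finset.mem_insert_of_mem hb) |>.trans hxB)

include hx hB hBA h2 in
lemma insert_not_mem_rest :
    insert x B ∉ insert ((P.part x).erase x) ((P.parts.erase (P.part x)).erase B) := by
  intro hmem
  rcases Finset.mem_insert.1 hmem with h | h
  · exact Finset.notMem_erase x _ (h ▸ Finset.mem_insert_self x B)
  · exact not_mem_of_mem_erase_part' hx (Finset.mem_of_mem_erase h)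
      (by
        have := Finset.mem_of_mem_erase (Finset.mem_of_mem_erase h)
        exact Finset.mem_insert_self x B)

include hx hB hBA h2 in
lemma erase_part_not_mem_rest :
    (P.part x).erase x ∉ (P.parts.erase (P.part x)).erase B := fun h =>
  part_not_mem_of_card_ne_one hx h2 (Finset.mem_of_mem_erase (Finset.mem_of_mem_erase h))

include hx hB hBA h2 in
lemma mv_card : (mvParts P x B).card = P.parts.card := by
  have hBmem : B ∈ P.parts.erase (P.part x) := Finset.mem_erase.2 ⟨hBA, hB⟩
  have hApos : P.parts.erase (P.part x) |>.Nonempty := ⟨B, hBmem⟩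
  rw [mvParts, Finset.card_insert_of_notMem (insert_not_mem_rest hx hB hBA h2),
    Finset.card_insert_of_notMem (erase_part_not_mem_rest hx hB hBA h2),
    Finset.card_erase_of_mem hBmem, Finset.card_erase_of_mem (P.part_mem.2 hx)]
  have h1 : 1 ≤ (P.parts.erase (P.part x)).card := Finset.card_pos.2 hApos
  have h2' : (P.parts.erase (P.part x)).card = P.parts.card - 1 :=
    Finset.card_erase_of_mem (P.part_mem.2 hx)
  have h3 : 2 ≤ P.parts.card := by
    have := Finset.card_pos.2 ⟨P.part x, P.part_mem.2 hx⟩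
    omega
  omega

/-- Moving `x` into `B` yields a finpartition. -/
def move (P : Finpartition S) (x : α) (B : Finset α) (hx : x ∈ S) (hB : B ∈ P.parts)
    (hBA : B ≠ P.part x) (h2 : (P.part x).card ≠ 1) : Finpartition S where
  parts := mvParts P x B
  supIndep := move_supIndep hx hB hBA h2
  sup_parts := move_sup_parts hx hB hBA h2
  bot_notMem := move_not_bot_mem hx hB hBA h2

include hx hB hBA h2 in
lemma move_ne : move P x B hx hB hBA h2 ≠ P := by
  intro h
  have : insert x B ∈ P.parts := by
    rw [← h]; exact Finset.mem_insert_self _ _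
  exact insert_not_mem_parts hx hB hBA this

include hx hB hBA h2 in
lemma move_part_x : (move P x B hx hB hBA h2).part x = insert x B :=
  Finpartition.part_eq_of_mem _ (Finset.mem_insert_self _ _) (Finset.mem_insert_self _ _)

include hx hB hBA h2 in
lemma move_eraseParts :
    eraseParts P.parts x = eraseParts (move P x B hx hB hBA h2).parts x := by
  have hxB : x ∉ B := x_not_mem_B hx hB hBA
  have hQ2 : ((move P x B hx hB hBA h2).part x).card ≠ 1 := by
    rw [move_part_x hx hB hBA h2, Finset.card_insert_of_notMem hxB]
    have := Finset.card_pos.2 (P.nonempty_of_mem_parts hB)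
    omega
  rw [eraseParts_eq_of_card_ne_one hx h2, eraseParts_eq_of_card_ne_one hx hQ2,
    move_part_x hx hB hBA h2]
  have hQparts : (move P x B hx hB hBA h2).parts = mvParts P x B := rfl
  rw [hQparts, mvParts, Finset.erase_insert (insert_not_mem_rest hx hB hBA h2),
    Finset.erase_insert hxB]
  rw [Finset.insert_comm B,
    Finset.insert_erase (Finset.mem_erase.2 ⟨hBA, hB⟩ : B ∈ P.parts.erase (P.part x))]

end Move2

section Recon
variable {y : α} {C : Finset α}

lemma part_eq_singleton (hx : x ∈ S) (h1 : (P.part x).card = 1) : P.part x = {x} := by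
  rw [Finset.card_eq_one] at h1
  obtain ⟨a, ha⟩ := h1
  have := P.mem_part hx
  rw [ha] at this ⊢
  simp_all

lemma insert_cancel {a : α} {s t : Finset α} (ha : a ∉ s) (ha' : a ∉ t)
    (h : insert a s = insert a t) : s = t := by
  rw [← Finset.erase_insert ha, h, Finset.erase_insert ha']

lemma insert_cancel' {a : Finset α} {s t : Finset (Finset α)} (ha : a ∉ s) (ha' : a ∉ t)
    (h : insert a s = insert a t) : s = t := by
  rw [← Finset.erase_insert ha, h, Finset.erase_insert ha']

/-- Reconstruction: if `P ≠ Q` agree off `x`, then `Q` is a move of `P`. -/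
lemma recon (hx : x ∈ S) (hcard : P.parts.card = Q.parts.card) (hne : P ≠ Q)
    (heq : eraseParts P.parts x = eraseParts Q.parts x) :
    ∃ B ∈ P.parts, B ≠ P.part x ∧ (P.part x).card ≠ 1 ∧ Q.parts = mvParts P x B := by
  by_cases h1 : (P.part x).card = 1
  · by_cases h1' : (Q.part x).card = 1
    · exfalso
      rw [eraseParts_eq_of_card_eq_one hx h1, eraseParts_eq_of_card_eq_one hx h1'] at heq
      apply hne
      ext1
      rw [← Finset.insert_erase (part_eq_singleton hx h1 ▸ P.part_mem.2 hx : {x} ∈ P.parts),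
        ← Finset.insert_erase (part_eq_singleton hx h1' ▸ Q.part_mem.2 hx : {x} ∈ Q.parts), heq]
    · exfalso
      have c1 := card_eraseParts_of_card_eq_one hx h1
      have c2 := card_eraseParts_of_card_ne_one hx h1'
      have hpos := Finset.card_pos.2 ⟨P.part x, P.part_mem.2 hx⟩
      rw [heq, c2] at c1
      omega
  · by_cases h1' : (Q.part x).card = 1
    · exfalso
      have c1 := card_eraseParts_of_card_ne_one hx h1
      have c2 := card_eraseParts_of_card_eq_one hx h1'
      have hpos := Finset.card_pos.2 ⟨Q.part x, Q.part_mem.2 hx⟩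
      rw [heq, c2] at c1
      omega
    · rw [eraseParts_eq_of_card_ne_one hx h1, eraseParts_eq_of_card_ne_one hx h1'] at heq
      by_cases hAA : (P.part x).erase x = (Q.part x).erase x
      · exfalso
        have hA : P.part x = Q.part x := by
          rw [← Finset.insert_erase (P.mem_part hx), hAA, Finset.insert_erase (Q.mem_part hx)]
        apply hne
        ext1
        have hrest : P.parts.erase (P.part x) = Q.parts.erase (Q.part x) := by
          refine insert_cancel' (part_not_mem_of_card_ne_one hx h1 ∘ Finset.mem_of_mem_erase)
            ?_ (hAA ▸ heq)
          exact fun h => part_not_mem_of_card_ne_one hx h1' (Finset.mem_of_mem_erase (hAA ▸ h))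
        rw [← Finset.insert_erase (P.part_mem.2 hx), hrest, hA,
          Finset.insert_erase (Q.part_mem.2 hx)]
      · -- B := (Q.part x).erase x is a part of P distinct from P.part x
        set B := (Q.part x).erase x with hBdef
        have hBmem : B ∈ P.parts.erase (P.part x) := by
          have : B ∈ insert ((P.part x).erase x) (P.parts.erase (P.part x)) := by
            rw [heq]; exact Finset.mem_insert_self _ _
          rcases Finset.mem_insert.1 this with h | h
          · exact absurd h.symm hAA
          · exact h
        have hBP : B ∈ P.parts := Finset.mem_of_mem_erase hBmem
        have hBne : B ≠ P.part x := Finset.ne_of_mem_erase hBmem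
        refine ⟨B, hBP, hBne, h1, ?_⟩
        have hQx : Q.part x = insert x B := by
          rw [hBdef, Finset.insert_erase (Q.mem_part hx)]
        have hQerase : Q.parts.erase (Q.part x) =
            insert ((P.part x).erase x) ((P.parts.erase (P.part x)).erase B) := by
          have h4 := congrArg (fun s => s.erase B) heq
          rw [Finset.erase_insert_of_ne hAA, Finset.erase_insert (fun h =>
            part_not_mem_of_card_ne_one hx h1' (Finset.mem_of_mem_erase h))] at h4
          exact h4.symm
        rw [mvParts, ← hQerase, ← hQx, Finset.insert_erase (Q.part_mem.2 hx)]
end Recon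

section Inj
variable {y : α} {C : Finset α}

lemma mv_inj (hx : x ∈ S) (hB : B ∈ P.parts) (hBA : B ≠ P.part x) (h2 : (P.part x).card ≠ 1)
    (hy : y ∈ S) (hC : C ∈ P.parts) (hCA : C ≠ P.part y) (h2' : (P.part y).card ≠ 1)
    (heq : mvParts P x B = mvParts P y C) : x = y ∧ B = C := by
  have hyC : y ∉ C := x_not_mem_B hy hC hCA
  have hxB : x ∉ B := x_not_mem_B hx hB hBA
  have hmem : insert y C ∈ mvParts P x B := by
    rw [heq]; exact Finset.mem_insert_self _ _
  rcases Finset.mem_insert.1 hmem with h | h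
  · by_cases hxy : x = y
    · subst hxy
      exact ⟨rfl, (insert_cancel hyC hxB h).symm⟩
    · exfalso
      have hxC : x ∈ C := by
        have : x ∈ insert y C := h ▸ Finset.mem_insert_self x B
        rcases Finset.mem_insert.1 this with h' | h'
        · exact absurd h' hxy
        · exact h'
      have hCx : C = P.part x := (P.part_eq_of_mem hC hxC).symm
      have hyB : y ∈ B := by
        have : y ∈ insert x B := h ▸ Finset.mem_insert_self y C
        rcases Finset.mem_insert.1 this with h' | h'
        · exact absurd h'.symm hxy
        · exact h'
      have hBy : B = P.part y := (P.part_eq_of_mem hB hyB).symm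
      obtain ⟨c, hc⟩ := erase_nonempty_of_card_ne_one hx h2
      rw [← hCx] at hc
      have hcC : c ∈ C := Finset.mem_of_mem_erase hc
      have hcx : c ≠ x := Finset.ne_of_mem_erase hc
      have hcB : c ∈ B := by
        have : c ∈ insert x B := h ▸ Finset.mem_insert_of_mem hcC
        rcases Finset.mem_insert.1 this with h' | h'
        · exact absurd h' hcx
        · exact h'
      have hCB : C = B := P.eq_of_mem_parts hC hB hcC hcB
      exact hBA (by rw [← hCx, hCB])
  · exfalso
    rcases Finset.mem_insert.1 h with h' | h'
    · have hCsub : C ⊆ (P.part x).erase x := (Finset.subset_insert y C).trans h'.le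
      obtain ⟨c, hc⟩ := P.nonempty_of_mem_parts hC
      have : C = P.part x :=
        P.eq_of_mem_parts hC (P.part_mem.2 hx) hc (Finset.mem_of_mem_erase (hCsub hc))
      have hxC : x ∈ C := this ▸ P.mem_part hx
      exact Finset.notMem_erase x _ (hCsub hxC)
    · have hmemP : insert y C ∈ P.parts :=
        Finset.mem_of_mem_erase (Finset.mem_of_mem_erase h')
      have hpart : P.part y = insert y C :=
        P.part_eq_of_mem hmemP (Finset.mem_insert_self _ _)
      have hCeq : C = (P.part y).erase y := by
        rw [hpart, Finset.erase_insert hyC]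
      exact part_not_mem_of_card_ne_one hy h2' (hCeq ▸ hC)

end Inj


section Graph
variable {r : ℕ}

lemma move_adj (hx : x ∈ S) (hB : B ∈ P.parts) (hBA : B ≠ P.part x)
    (h2 : (P.part x).card ≠ 1) (hP : P.parts.card = r)
    (hQ : (move P x B hx hB hBA h2).parts.card = r) :
    (partitionGraph S r).Adj ⟨P, hP⟩ ⟨move P x B hx hB hBA h2, hQ⟩ := by
  constructor
  · intro h
    exact move_ne hx hB hBA h2 (congrArg Subtype.val h).symm
  · refine ⟨x, ⟨hx, move_eraseParts hx hB hBA h2⟩, ?_⟩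
    rintro y ⟨hy, hey⟩
    obtain ⟨C, hC, hCA, h2', hQparts⟩ :=
      recon hy (hP.trans hQ.symm) (move_ne hx hB hBA h2).symm hey
    exact (mv_inj hx hB hBA h2 hy hC hCA h2' hQparts).1.symm

/-- The finset of admissible moves. -/
def pairFinset (P : Finpartition S) : Finset (α × Finset α) :=
  (S ×ˢ P.parts).filter fun p => p.2 ≠ P.part p.1 ∧ (P.part p.1).card ≠ 1

lemma mem_pairFinset {p : α × Finset α} : p ∈ pairFinset P ↔
    p.1 ∈ S ∧ p.2 ∈ P.parts ∧ p.2 ≠ P.part p.1 ∧ (P.part p.1).card ≠ 1 := by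
  simp [pairFinset, Finset.mem_filter, Finset.mem_product, and_assoc]

/-- The move map into the vertex type. -/
def mvFun (P : Finpartition S) (hP : P.parts.card = r) (p : α × Finset α) :
    {Q : Finpartition S // Q.parts.card = r} :=
  if h : p.1 ∈ S ∧ p.2 ∈ P.parts ∧ p.2 ≠ P.part p.1 ∧ (P.part p.1).card ≠ 1
  then ⟨move P p.1 p.2 h.1 h.2.1 h.2.2.1 h.2.2.2,
    (mv_card h.1 h.2.1 h.2.2.1 h.2.2.2).trans hP⟩
  else ⟨P, hP⟩

lemma neighborSet_eq (hP : P.parts.card = r) :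
    (partitionGraph S r).neighborSet ⟨P, hP⟩ = ↑((pairFinset P).image (mvFun P hP)) := by
  ext Q
  simp only [SimpleGraph.mem_neighborSet, Finset.coe_image, Set.mem_image, Finset.mem_coe]
  constructor
  · rintro ⟨hne, x, ⟨hx, hex⟩, -⟩
    have hne' : P ≠ Q.1 := fun h => hne (Subtype.ext h)
    obtain ⟨B, hB, hBA, h2, hQparts⟩ := recon hx (hP.trans Q.2.symm) hne' hex
    refine ⟨(x, B), mem_pairFinset.2 ⟨hx, hB, hBA, h2⟩, ?_⟩
    rw [mvFun, dif_pos (⟨hx, hB, hBA, h2⟩ :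
      (x, B).1 ∈ S ∧ (x, B).2 ∈ P.parts ∧ (x, B).2 ≠ P.part (x, B).1 ∧ (P.part (x, B).1).card ≠ 1)]
    exact Subtype.ext (Finpartition.ext hQparts.symm)
  · rintro ⟨p, hp, rfl⟩
    obtain ⟨hx, hB, hBA, h2⟩ := mem_pairFinset.1 hp
    rw [mvFun, dif_pos ⟨hx, hB, hBA, h2⟩]
    exact move_adj hx hB hBA h2 hP _

lemma mvFun_injOn (hP : P.parts.card = r) :
    Set.InjOn (mvFun P hP) ↑(pairFinset P) := by
  intro p hp q hq heq
  obtain ⟨hx, hB, hBA, h2⟩ := mem_pairFinset.1 hp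
  obtain ⟨hy, hC, hCA, h2'⟩ := mem_pairFinset.1 hq
  rw [mvFun, dif_pos ⟨hx, hB, hBA, h2⟩, mvFun, dif_pos ⟨hy, hC, hCA, h2'⟩] at heq
  have hparts : mvParts P p.1 p.2 = mvParts P q.1 q.2 :=
    congrArg (fun Q => Q.1.parts) heq
  obtain ⟨h1, h2''⟩ := mv_inj hx hB hBA h2 hy hC hCA h2' hparts
  exact Prod.ext h1 h2''

end Graph

section Count
variable {r n k : ℕ}

lemma pairFinset_eq : pairFinset P =
    (S.filter fun x => (P.part x).card ≠ 1).biUnion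
      (fun x => (P.parts.erase (P.part x)).image (Prod.mk x)) := by
  ext ⟨a, b⟩
  simp only [mem_pairFinset, Finset.mem_biUnion, Finset.mem_filter, Finset.mem_image,
    Finset.mem_erase, Prod.mk.injEq]
  constructor
  · rintro ⟨ha, hb, hba, h1⟩
    exact ⟨a, ⟨ha, h1⟩, b, ⟨hba, hb⟩, rfl, rfl⟩
  · rintro ⟨x, ⟨hx, h1⟩, c, ⟨hc1, hc2⟩, rfl, rfl⟩
    exact ⟨hx, hc2, hc1, h1⟩

lemma card_pairFinset (hP : P.parts.card = r) :
    (pairFinset P).card = (S.filter fun x => (P.part x).card ≠ 1).card * (r - 1) := by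
  rw [pairFinset_eq, Finset.card_biUnion]
  · rw [Finset.sum_congr rfl (fun x hx => ?_), Finset.sum_const, smul_eq_mul]
    have hxS : x ∈ S := (Finset.mem_filter.1 hx).1
    rw [Finset.card_image_of_injective _ (fun b c h => (Prod.ext_iff.1 h).2),
      Finset.card_erase_of_mem (P.part_mem.2 hxS), hP]
  · intro x hx y hy hxy
    simp only [Finset.disjoint_left, Finset.mem_image]
    rintro p ⟨b, hb, rfl⟩ ⟨c, hc, h⟩
    exact hxy (Prod.ext_iff.1 h).1.symm

lemma card_singleton_elems (hn : S.card = n)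
    (hk : (P.parts.filter fun t => t.card = 1).card = k) :
    (S.filter fun x => (P.part x).card ≠ 1).card = n - k := by
  have key : S.filter (fun x => (P.part x).card = 1) =
      (P.parts.filter fun t => t.card = 1).biUnion id := by
    ext a
    simp only [Finset.mem_filter, Finset.mem_biUnion, id_eq]
    constructor
    · rintro ⟨ha, h1⟩
      exact ⟨P.part a, ⟨P.part_mem.2 ha, h1⟩, P.mem_part ha⟩
    · rintro ⟨t, ⟨ht, h1⟩, hat⟩
      have haS : a ∈ S := P.le ht hat
      exact ⟨haS, (P.part_eq_of_mem ht hat).symm ▸ h1⟩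
  have hcard1 : (S.filter fun x => (P.part x).card = 1).card = k := by
    rw [key, Finset.card_biUnion]
    · have hsum : ∑ u ∈ (P.parts.filter fun t => t.card = 1), #(id u) =
          ∑ _u ∈ (P.parts.filter fun t => t.card = 1), 1 :=
        Finset.sum_congr rfl (fun t ht => (Finset.mem_filter.1 ht).2)
      rw [hsum, Finset.sum_const, smul_eq_mul, mul_one, hk]
    · intro t ht u hu htu
      exact P.supIndep.pairwiseDisjoint (Finset.mem_filter.1 ht).1 (Finset.mem_filter.1 hu).1 htu
  have := Finset.card_filter_add_card_filter_not
    (s := S) (p := fun x => (P.part x).card = 1)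
  rw [hcard1, hn] at this
  have heq : (S.filter fun x => ¬ (P.part x).card = 1) =
      (S.filter fun x => (P.part x).card ≠ 1) := by
    simp [ne_eq]
  rw [← heq]
  omega
end Count

end Aux

/-- A partition of an `n`-element set into exactly `r` nonempty parts having exactly `k`
singleton parts has degree `(n-k)(r-1)` in the `r`-partition graph. -/
theorem partitionGraph_degree {α : Type*} [DecidableEq α] (S : Finset α) (n r k : ℕ)
    (hn : S.card = n) (hr : 0 < r)
    (P : Finpartition S) (hP : P.parts.card = r)
    (hk : (P.parts.filter fun t => t.card = 1).card = k) :
    ((partitionGraph S r).neighborSet ⟨P, hP⟩).ncard = (n - k) * (r - 1) := by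
  subst hn hk
  rw [neighborSet_eq hP, Set.ncard_coe_finset,
    Finset.card_image_of_injOn (mvFun_injOn hP), card_pairFinset hP,
    card_singleton_elems rfl rfl]
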